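/- Let a, b, c be points in the Euclidean plane ℝ² with pairwise distances at most 2. Then: (i) ρ(a,b) + ρ(b,c) > ρ(a,c) if and only if b does not belong to the closed spindle [a,c]_s; (ii) ρ(a,b) + ρ(b,c) = ρ(a,c) if and only if b belongs to the topological boundary of [a,c]_s; (iii) ρ(a,b) + ρ(b,c) < ρ(a,c) if and only if b belongs to the interior of [a,c]_s. -/

import Mathlib

noncomputable section

/-- `B[X]`: the intersection of all closed unit balls centered at points of `X`
(`Set.univ` when `X = ∅`). -/
def ballInter {n : ℕ} (X : Set (EuclideanSpace ℝ (Fin n))) :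
    Set (EuclideanSpace ℝ (Fin n)) :=
  ⋂ x ∈ X, Metric.closedBall x 1

/-- The closed spindle `[a,b]_s`: `B[B[{a,b}]]` if `dist a b ≤ 2`, all of the space
otherwise. -/
def spindle {n : ℕ} (a b : EuclideanSpace ℝ (Fin n)) :
    Set (EuclideanSpace ℝ (Fin n)) :=
  if dist a b ≤ 2 then ballInter (ballInter {a, b}) else Set.univ

/-- A set is spindle convex if it contains the closed spindle of any two of its points. -/
def SpindleConvex {n : ℕ} (C : Set (EuclideanSpace ℝ (Fin n))) : Prop :=
  ∀ a ∈ C, ∀ b ∈ C, spindle a b ⊆ C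

/-- The spindle convex hull: the intersection of all spindle convex sets containing `X`. -/
def spindleHull {n : ℕ} (X : Set (EuclideanSpace ℝ (Fin n))) :
    Set (EuclideanSpace ℝ (Fin n)) :=
  ⋂₀ {C : Set (EuclideanSpace ℝ (Fin n)) | X ⊆ C ∧ SpindleConvex C}

/-- Arc-distance `ρ(a,b) = 2 · arcsin(‖a - b‖ / 2)`. -/
def arcDist {n : ℕ} (a b : EuclideanSpace ℝ (Fin n)) : ℝ :=
  2 * Real.arcsin (dist a b / 2)

set_option maxHeartbeats 1000000


lemma key1aux (s t u v w z : ℝ) (hs : 0 ≤ s) (ht : 0 ≤ t) (hst : s^2 + t^2 = 1)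
    (hv : 0 ≤ v) (hw : 0 ≤ w)
    (h2 : u^2 + (v+s)^2 ≤ 1) (h4 : (w+t)^2 + z^2 ≤ 1) :
    (u-w)^2 + (v-z)^2 ≤ 1 := by
  have hut : u^2 ≤ t^2 := by nlinarith [mul_nonneg hs hv, sq_nonneg v]
  have hzs : z^2 ≤ s^2 := by nlinarith [mul_nonneg ht hw, sq_nonneg w]
  have h5 : 0 ≤ w * (t + u) := mul_nonneg hw (by nlinarith [sq_nonneg (t+u)])
  have h6 : 0 ≤ v * (s + z) := mul_nonneg hv (by nlinarith [sq_nonneg (s+z)])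
  nlinarith

lemma key1 (s t u v w z : ℝ) (hs : 0 ≤ s) (ht : 0 ≤ t) (hst : s^2 + t^2 = 1)
    (h1 : u^2 + (v-s)^2 ≤ 1) (h2 : u^2 + (v+s)^2 ≤ 1)
    (h3 : (w-t)^2 + z^2 ≤ 1) (h4 : (w+t)^2 + z^2 ≤ 1) :
    (u-w)^2 + (v-z)^2 ≤ 1 := by
  rcases le_total 0 v with hv | hv <;> rcases le_total 0 w with hw | hw
  · exact key1aux s t u v w z hs ht hst hv hw h2 h4
  · have h := key1aux s t (-u) v (-w) z hs ht hst hv (by linarith)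
      (by nlinarith [h2]) (by nlinarith [h3])
    nlinarith [h]
  · have h := key1aux s t u (-v) w (-z) hs ht hst (by linarith) hw
      (by nlinarith [h1]) (by nlinarith [h4])
    nlinarith [h]
  · have h := key1aux s t (-u) (-v) (-w) (-z) hs ht hst (by linarith) (by linarith)
      (by nlinarith [h1]) (by nlinarith [h3])
    nlinarith [h]

lemma sqeq (x y : ℝ) (hx : 0 ≤ x) (hy : 0 ≤ y) (h : x^2 = y^2) : x = y := by
  nlinarith [sq_nonneg (x - y), sq_nonneg (x + y)]

lemma key2s (s t v L : ℝ) (hs : 0 ≤ s) (ht : 0 ≤ t) (hst : s^2 + t^2 = 1)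
    (htv : t = 0 → L + v^2 ≤ 0) :
    (s * Real.sqrt (L^2 + 4*t^2*v^2) ≤ L ↔ 2*s*|v| ≤ L) ∧
    (s * Real.sqrt (L^2 + 4*t^2*v^2) = L ↔ 2*s*|v| = L) := by
  have hV : 0 ≤ |v| := abs_nonneg v
  have hV2 : |v|^2 = v^2 := sq_abs v
  have hQ : (0:ℝ) ≤ L^2 + 4*t^2*v^2 := by positivity
  set K := Real.sqrt (L^2 + 4*t^2*v^2) with hKdef
  have hK : 0 ≤ K := Real.sqrt_nonneg _
  have hK2 : K^2 = L^2 + 4*t^2*v^2 := Real.sq_sqrt hQ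
  have hsK2 : s^2*K^2 = s^2*L^2 + 4*s^2*t^2*v^2 := by linear_combination s^2 * hK2
  have e1 : t^2*L^2 = L^2 - s^2*L^2 := by linear_combination L^2 * hst
  rcases eq_or_lt_of_le ht with ht0 | ht0
  · -- t = 0
    have hs1 : s = 1 := by nlinarith [sq_nonneg (s-1), sq_nonneg (s+1)]
    have hL : L + v^2 ≤ 0 := htv ht0.symm
    have hKL : K = |L| := by
      rw [hKdef, ← ht0]; simp [Real.sqrt_sq_eq_abs]
    constructor
    · constructor
      · intro h
        rw [hKL, hs1, one_mul] at h
        have hL0 : 0 ≤ L := le_trans (abs_nonneg L) h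
        have hv2 : v^2 = 0 := le_antisymm (by linarith) (sq_nonneg v)
        have hv0 : v = 0 := pow_eq_zero_iff two_ne_zero |>.mp hv2
        have hL00 : L = 0 := le_antisymm (by linarith) hL0
        simp [hv0, hL00]
      · intro h
        have hL0 : 0 ≤ L := le_trans (by positivity) h
        have hv2 : v^2 = 0 := le_antisymm (by linarith) (sq_nonneg v)
        have hL00 : L = 0 := le_antisymm (by linarith) hL0
        rw [hKL, hs1, one_mul, hL00]
        simp
    · constructor
      · intro h
        rw [hKL, hs1, one_mul] at h
        have hL0 : 0 ≤ L := h ▸ abs_nonneg L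
        have hv2 : v^2 = 0 := le_antisymm (by linarith) (sq_nonneg v)
        have hv0 : v = 0 := pow_eq_zero_iff two_ne_zero |>.mp hv2
        have hL00 : L = 0 := le_antisymm (by linarith) hL0
        simp [hv0, hL00]
      · intro h
        have hL0 : 0 ≤ L := le_trans (by positivity) h.le
        have hv2 : v^2 = 0 := le_antisymm (by linarith) (sq_nonneg v)
        have hL00 : L = 0 := le_antisymm (by linarith) hL0
        rw [hKL, hs1, one_mul, hL00]; simp [hL00]
  · -- t > 0
    have htt : 0 < t^2 := by positivity
    constructor
    · constructor
      · intro h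
        have hL0 : 0 ≤ L := le_trans (by positivity) h
        have hp1 : 0 ≤ (L - s*K) * (L + s*K) :=
          mul_nonneg (by linarith) (by positivity)
        have hsq : s^2*K^2 ≤ L^2 := by nlinarith [hp1]
        have hrel : 0 ≤ t^2*L^2 - 4*s^2*t^2*v^2 := by linarith
        have h4 : 4*s^2*v^2 ≤ L^2 := by nlinarith [hrel, htt]
        nlinarith [h4, hV2, hL0, mul_nonneg (mul_nonneg hs hV) hL0,
          sq_nonneg (2*s*|v| - L), sq_nonneg (2*s*|v| + L)]
      · intro h
        have hL0 : 0 ≤ L := le_trans (by positivity) h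
        have hp1 : 0 ≤ (L - 2*s*|v|) * (L + 2*s*|v|) :=
          mul_nonneg (by linarith) (by positivity)
        have h4 : 4*s^2*v^2 ≤ L^2 := by nlinarith [hp1, hV2]
        have hp2 : 0 ≤ t^2 * (L^2 - 4*s^2*v^2) := mul_nonneg (by positivity) (by linarith)
        have hsq : s^2*K^2 ≤ L^2 := by nlinarith [hp2]
        nlinarith [hsq, hL0, mul_nonneg hs hK]
    · constructor
      · intro h
        have hL0 : 0 ≤ L := h ▸ mul_nonneg hs hK
        have hsq : s^2*K^2 = L^2 := by linear_combination (s*K + L) * h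
        have h4eq : t^2 * (L^2 - 4*s^2*v^2) = 0 := by nlinarith [hsq]
        have hX : L^2 - 4*s^2*v^2 = 0 :=
          (mul_eq_zero.mp h4eq).resolve_left (by positivity)
        refine sqeq (2*s*|v|) L (by positivity) hL0 ?_
        linear_combination -hX + 4*s^2 * hV2
      · intro h
        have hL0 : 0 ≤ L := le_trans (by positivity) h.le
        have h4 : 4*s^2*v^2 = L^2 := by
          rw [← h]; linear_combination (-4*s^2) * hV2
        have e2 : 4*s^2*t^2*v^2 = t^2*L^2 := by linear_combination t^2 * h4
        have hsq : s^2*K^2 = L^2 := by linarith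
        exact sqeq _ _ (mul_nonneg hs hK) hL0 (by linear_combination hsq)

open Real in
lemma key2 (s t u v : ℝ) (hs : 0 ≤ s) (ht : 0 ≤ t) (hst : s^2 + t^2 = 1)
    (h1 : (u+t)^2 + v^2 ≤ 4) (h2 : (u-t)^2 + v^2 ≤ 4) :
    (arcsin (Real.sqrt ((u+t)^2+v^2) / 2) + arcsin (Real.sqrt ((u-t)^2+v^2) / 2)
      ≤ arcsin t ↔ u^2+v^2+2*s*|v| ≤ t^2) ∧
    (arcsin (Real.sqrt ((u+t)^2+v^2) / 2) + arcsin (Real.sqrt ((u-t)^2+v^2) / 2)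
      = arcsin t ↔ u^2+v^2+2*s*|v| = t^2) := by
  have ht1 : t ≤ 1 := by nlinarith
  have hQ1 : (0:ℝ) ≤ (u+t)^2 + v^2 := by positivity
  have hQ2 : (0:ℝ) ≤ (u-t)^2 + v^2 := by positivity
  set D1 := Real.sqrt ((u+t)^2+v^2) with hD1def
  set D2 := Real.sqrt ((u-t)^2+v^2) with hD2def
  have hD1 : 0 ≤ D1 := Real.sqrt_nonneg _
  have hD2 : 0 ≤ D2 := Real.sqrt_nonneg _
  have hD1sq : D1^2 = (u+t)^2 + v^2 := Real.sq_sqrt hQ1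
  have hD2sq : D2^2 = (u-t)^2 + v^2 := Real.sq_sqrt hQ2
  have h4 : Real.sqrt 4 = 2 := by
    rw [show (4:ℝ) = 2^2 by norm_num, Real.sqrt_sq (by norm_num : (0:ℝ) ≤ 2)]
  have hD1le : D1 ≤ 2 := h4 ▸ Real.sqrt_le_sqrt h1
  have hD2le : D2 ≤ 2 := h4 ▸ Real.sqrt_le_sqrt h2
  set x1 := D1/2 with hx1def
  set x2 := D2/2 with hx2def
  have hx1 : 0 ≤ x1 := by positivity
  have hx2 : 0 ≤ x2 := by positivity
  have hx1le : x1 ≤ 1 := by rw [hx1def]; linarith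
  have hx2le : x2 ≤ 1 := by rw [hx2def]; linarith
  -- memberships in Icc 0 π
  have hα0 : 0 ≤ arcsin x1 := arcsin_nonneg.mpr hx1
  have hβ0 : 0 ≤ arcsin x2 := arcsin_nonneg.mpr hx2
  have hγ0 : 0 ≤ arcsin t := arcsin_nonneg.mpr ht
  have hαπ := arcsin_le_pi_div_two x1
  have hβπ := arcsin_le_pi_div_two x2
  have hγπ := arcsin_le_pi_div_two t
  have hπ : 0 < π := pi_pos
  have hmem1 : arcsin x1 + arcsin x2 ∈ Set.Icc 0 π := by
    constructor <;> [linarith; linarith]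
  have hmem2 : arcsin t ∈ Set.Icc 0 π := by
    constructor <;> [linarith; linarith]
  have hx1sq : x1^2 = ((u+t)^2+v^2)/4 := by
    rw [hx1def, div_pow, hD1sq]; norm_num
  have hx2sq : x2^2 = ((u-t)^2+v^2)/4 := by
    rw [hx2def, div_pow, hD2sq]; norm_num
  have h1x1 : (0:ℝ) ≤ 1 - x1^2 := by rw [hx1sq]; linarith
  have h1x2 : (0:ℝ) ≤ 1 - x2^2 := by rw [hx2sq]; linarith
  -- cosine values
  have hcos : Real.cos (arcsin x1 + arcsin x2)
      = Real.sqrt ((1 - x1^2) * (1 - x2^2)) - x1 * x2 := by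
    rw [Real.cos_add, Real.cos_arcsin, Real.cos_arcsin,
      Real.sin_arcsin (by linarith) hx1le, Real.sin_arcsin (by linarith) hx2le,
      ← Real.sqrt_mul h1x1]
  have hcosγ : Real.cos (arcsin t) = s := by
    rw [Real.cos_arcsin, show 1 - t^2 = s^2 by linarith, Real.sqrt_sq hs]
  -- key comparison rewrite
  have hiffle : arcsin x1 + arcsin x2 ≤ arcsin t ↔
      s + x1 * x2 ≤ Real.sqrt ((1 - x1^2) * (1 - x2^2)) := by
    rw [← Real.strictAntiOn_cos.le_iff_ge hmem2 hmem1, hcos, hcosγ]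
    constructor <;> intro h <;> linarith
  have hiffeq : arcsin x1 + arcsin x2 = arcsin t ↔
      s + x1 * x2 = Real.sqrt ((1 - x1^2) * (1 - x2^2)) := by
    rw [← (Real.strictAntiOn_cos.injOn.eq_iff hmem1 hmem2), hcos, hcosγ]
    constructor <;> intro h <;> linarith
  -- translate sqrt inequality to polynomial one
  have hAB : (0:ℝ) ≤ (1 - x1^2) * (1 - x2^2) := mul_nonneg h1x1 h1x2
  set L := t^2 - u^2 - v^2 with hLdef
  set K := Real.sqrt (L^2 + 4*t^2*v^2) with hKdef2
  have hK0 : 0 ≤ K := Real.sqrt_nonneg _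
  have hK2' : K^2 = L^2 + 4*t^2*v^2 := Real.sq_sqrt (by positivity)
  have hKrw : x1 * x2 = K/4 := by
    rw [hx1def, hx2def, div_mul_div_comm, ← Real.sqrt_mul hQ1,
      show ((u+t)^2+v^2) * ((u-t)^2+v^2) = L^2 + 4*t^2*v^2 by rw [hLdef]; ring]
    norm_num; exact hKdef2.symm
  have hYrw : (1 - x1^2)*(1 - x2^2)
      = ((4-((u+t)^2+v^2))*(4-((u-t)^2+v^2)))/16 := by
    rw [hx1sq, hx2sq]; ring
  have hG0 : (0:ℝ) ≤ (4-((u+t)^2+v^2))*(4-((u-t)^2+v^2)) :=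
    mul_nonneg (by linarith) (by linarith)
  have h116 : Real.sqrt (1/16 : ℝ) = 1/4 := by
    rw [show (1/16:ℝ) = (1/4)^2 by norm_num, Real.sqrt_sq (by norm_num : (0:ℝ) ≤ 1/4)]
  have hsqrtG : Real.sqrt ((1-x1^2)*(1-x2^2))
      = Real.sqrt ((4-((u+t)^2+v^2))*(4-((u-t)^2+v^2)))/4 := by
    rw [hYrw, show ((4-((u+t)^2+v^2))*(4-((u-t)^2+v^2)))/16
        = ((4-((u+t)^2+v^2))*(4-((u-t)^2+v^2))) * (1/16) by ring,
      Real.sqrt_mul hG0, h116]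
    ring
  have hL2 : L^2 = (t^2-u^2-v^2)^2 := by rw [hLdef]
  have main_le : (s + x1*x2 ≤ Real.sqrt ((1-x1^2)*(1-x2^2))) ↔ s*K ≤ L := by
    rw [hsqrtG, hKrw]
    constructor
    · intro h
      have h2' : 4*s + K ≤ Real.sqrt ((4-((u+t)^2+v^2))*(4-((u-t)^2+v^2))) := by
        linarith
      have h3' := (Real.le_sqrt (by positivity) hG0).mp h2'
      linarith [h3', hK2', hst, hLdef, hL2]
    · intro h
      have h3' : (4*s + K)^2 ≤ (4-((u+t)^2+v^2))*(4-((u-t)^2+v^2)) := by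
        linarith [hK2', hst, hLdef, hL2]
      have h2' := (Real.le_sqrt (by positivity) hG0).mpr h3'
      linarith
  have main_eq : (s + x1*x2 = Real.sqrt ((1-x1^2)*(1-x2^2))) ↔ s*K = L := by
    rw [hsqrtG, hKrw]
    constructor
    · intro h
      have h2' : (s + K/4)^2 = ((4-((u+t)^2+v^2))*(4-((u-t)^2+v^2)))/16 := by
        rw [h]
        rw [div_pow, Real.sq_sqrt hG0]
        norm_num
      linarith [h2', hK2', hst, hLdef, hL2]
    · intro h
      have h2' : (4-((u+t)^2+v^2))*(4-((u-t)^2+v^2)) = (4*s + K)^2 := by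
        linarith [hK2', hst, hLdef, hL2]
      rw [h2', Real.sqrt_sq (by positivity : (0:ℝ) ≤ 4*s + K)]
      ring
  have hkey := key2s s t v L hs ht hst (by intro h0; rw [hLdef, h0]; ring_nf; linarith [sq_nonneg u])
  rw [← hKdef2] at hkey
  constructor
  · rw [hiffle, main_le, hkey.1]
    constructor <;> intro h <;> [linarith; linarith]
  · rw [hiffeq, main_eq, hkey.2]
    constructor <;> intro h <;> [linarith; linarith]


lemma le_one_of_sq (d : ℝ) (h0 : 0 ≤ d) (h : d^2 ≤ 1) : d ≤ 1 := by nlinarith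
lemma sq_le_one (d : ℝ) (h : d ≤ 1) (h0 : 0 ≤ d) : d^2 ≤ 1 := by nlinarith
lemma lt_one_of_sq (d : ℝ) (h0 : 0 ≤ d) (h : d^2 < 1) : d < 1 := by nlinarith
lemma sq_lt_one (d : ℝ) (h : d < 1) (h0 : 0 ≤ d) : d^2 < 1 := by nlinarith
lemma sq_le_four (d : ℝ) (h : d ≤ 2) (h0 : 0 ≤ d) : d^2 ≤ 4 := by nlinarith

lemma sq_dist (x y : EuclideanSpace ℝ (Fin 2)) :
    dist x y ^ 2 = (x 0 - y 0)^2 + (x 1 - y 1)^2 := by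
  rw [EuclideanSpace.dist_eq, Real.sq_sqrt (by positivity)]
  simp [Fin.sum_univ_two, Real.dist_eq, sq_abs]

lemma mem_ballInter2 (y a c : EuclideanSpace ℝ (Fin 2)) :
    y ∈ ballInter (ballInter {a, c}) ↔
      ∀ x : EuclideanSpace ℝ (Fin 2), dist x a ≤ 1 → dist x c ≤ 1 → dist y x ≤ 1 := by
  simp only [ballInter, Set.mem_iInter, Metric.mem_closedBall, Set.mem_insert_iff,
    Set.mem_singleton_iff]
  constructor
  · intro h x hxa hxc
    exact h x (by rintro z (rfl | rfl) <;> assumption)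
  · intro h x hx
    exact h x (hx a (Or.inl rfl)) (hx c (Or.inr rfl))


theorem arcDist_triangle_trichotomy (a b c : EuclideanSpace ℝ (Fin 2))
    (hab : dist a b ≤ 2) (hac : dist a c ≤ 2) (hbc : dist b c ≤ 2) :
    (arcDist a b + arcDist b c > arcDist a c ↔ b ∉ spindle a c) ∧
    (arcDist a b + arcDist b c = arcDist a c ↔ b ∈ frontier (spindle a c)) ∧
    (arcDist a b + arcDist b c < arcDist a c ↔ b ∈ interior (spindle a c)) := by
  set t := dist a c / 2 with htdef
  have ht0 : 0 ≤ t := by rw [htdef]; positivity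
  have ht1 : t ≤ 1 := by rw [htdef]; linarith
  set s := Real.sqrt (1 - t^2) with hsdef
  have hs0 : 0 ≤ s := Real.sqrt_nonneg _
  have hst : s^2 + t^2 = 1 := by
    rw [hsdef, Real.sq_sqrt (by nlinarith)]; ring
  obtain ⟨e0, e1, he, hca0, hca1⟩ :
      ∃ e0 e1 : ℝ, e0^2 + e1^2 = 1 ∧ c 0 - a 0 = 2*t*e0 ∧ c 1 - a 1 = 2*t*e1 := by
    by_cases hh : a = c
    · refine ⟨1, 0, by norm_num, ?_, ?_⟩ <;> subst hh <;> simp [htdef]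
    · have hdpos : 0 < dist a c := dist_pos.mpr hh
      have hne : dist a c ≠ 0 := ne_of_gt hdpos
      refine ⟨(c 0 - a 0)/dist a c, (c 1 - a 1)/dist a c, ?_, ?_, ?_⟩
      · have h := sq_dist a c
        field_simp
        linear_combination -h
      · rw [htdef]; field_simp
      · rw [htdef]; field_simp
  set μ0 := (a 0 + c 0)/2 with hμ0
  set μ1 := (a 1 + c 1)/2 with hμ1
  set U : EuclideanSpace ℝ (Fin 2) → ℝ := fun y => (y 0 - μ0)*e0 + (y 1 - μ1)*e1 with hU
  set V : EuclideanSpace ℝ (Fin 2) → ℝ := fun y => -((y 0 - μ0))*e1 + (y 1 - μ1)*e0 with hV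
  have hdsq : ∀ x y : EuclideanSpace ℝ (Fin 2),
      dist x y ^ 2 = (U x - U y)^2 + (V x - V y)^2 := by
    intro x y
    rw [sq_dist, hU, hV]
    simp only
    linear_combination (-((x 0 - y 0)^2 + (x 1 - y 1)^2)) * he
  set p : EuclideanSpace ℝ (Fin 2) := !₂[μ0 - s*e1, μ1 + s*e0] with hpdef
  set q : EuclideanSpace ℝ (Fin 2) := !₂[μ0 + s*e1, μ1 - s*e0] with hqdef
  have hp0 : p 0 = μ0 - s*e1 := rfl
  have hp1 : p 1 = μ1 + s*e0 := rfl
  have hq0 : q 0 = μ0 + s*e1 := rfl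
  have hq1 : q 1 = μ1 - s*e0 := rfl
  have hUp : U p = 0 := by simp only [hU, hp0, hp1]; ring
  have hVp : V p = s := by simp only [hV, hp0, hp1]; linear_combination s * he
  have hUq : U q = 0 := by simp only [hU, hq0, hq1]; ring
  have hVq : V q = -s := by simp only [hV, hq0, hq1]; linear_combination (-s) * he
  have hUa : U a = -t := by
    simp only [hU, hμ0, hμ1]
    linear_combination (-e0/2) * hca0 + (-e1/2) * hca1 - t * he
  have hVa : V a = 0 := by
    simp only [hV, hμ0, hμ1]
    linear_combination (e1/2) * hca0 + (-e0/2) * hca1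
  have hUc : U c = t := by
    simp only [hU, hμ0, hμ1]
    linear_combination (e0/2) * hca0 + (e1/2) * hca1 + t * he
  have hVc : V c = 0 := by
    simp only [hV, hμ0, hμ1]
    linear_combination (-e1/2) * hca0 + (e0/2) * hca1
  -- p and q are at distance 1 from a and c
  have hpa : dist p a ≤ 1 := by
    apply le_one_of_sq _ dist_nonneg
    rw [hdsq, hUp, hVp, hUa, hVa]; linarith [hst]
  have hpc : dist p c ≤ 1 := by
    apply le_one_of_sq _ dist_nonneg
    rw [hdsq, hUp, hVp, hUc, hVc]; linarith [hst]
  have hqa : dist q a ≤ 1 := by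
    apply le_one_of_sq _ dist_nonneg
    rw [hdsq, hUq, hVq, hUa, hVa]; linarith [hst]
  have hqc : dist q c ≤ 1 := by
    apply le_one_of_sq _ dist_nonneg
    rw [hdsq, hUq, hVq, hUc, hVc]; linarith [hst]
  -- spindle characterization
  have hspin : spindle a c = Metric.closedBall p 1 ∩ Metric.closedBall q 1 := by
    have h0 : spindle a c = ballInter (ballInter {a, c}) := if_pos hac
    rw [h0]
    ext y
    rw [mem_ballInter2 y a c]
    simp only [Set.mem_inter_iff, Metric.mem_closedBall]
    constructor
    · intro h
      exact ⟨h p hpa hpc, h q hqa hqc⟩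
    · rintro ⟨h1, h2⟩ x hxa hxc
      apply le_one_of_sq _ dist_nonneg
      rw [hdsq]
      have e1' : (U y)^2 + (V y - s)^2 ≤ 1 := by
        have hd := hdsq y p; rw [hUp, hVp] at hd
        have := sq_le_one _ h1 dist_nonneg
        rw [hd] at this; linarith
      have e2' : (U y)^2 + (V y + s)^2 ≤ 1 := by
        have hd := hdsq y q; rw [hUq, hVq] at hd
        have := sq_le_one _ h2 dist_nonneg
        rw [hd] at this
        calc (U y)^2 + (V y + s)^2 = (U y - 0)^2 + (V y - -s)^2 := by ring
        _ ≤ 1 := this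
      have e3' : (U x - t)^2 + (V x)^2 ≤ 1 := by
        have hd := hdsq x c; rw [hUc, hVc] at hd
        have := sq_le_one _ hxc dist_nonneg
        rw [hd] at this
        calc (U x - t)^2 + (V x)^2 = (U x - t)^2 + (V x - 0)^2 := by ring
        _ ≤ 1 := this
      have e4' : (U x + t)^2 + (V x)^2 ≤ 1 := by
        have hd := hdsq x a; rw [hUa, hVa] at hd
        have := sq_le_one _ hxa dist_nonneg
        rw [hd] at this
        calc (U x + t)^2 + (V x)^2 = (U x - -t)^2 + (V x - 0)^2 := by ring
        _ ≤ 1 := this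
      exact key1 s t (U y) (V y) (U x) (V x) hs0 ht0 hst e1' e2' e3' e4'
  have hclosed : IsClosed (spindle a c) := by
    rw [hspin]; exact Metric.isClosed_closedBall.inter Metric.isClosed_closedBall
  have hint : interior (spindle a c) = Metric.ball p 1 ∩ Metric.ball q 1 := by
    rw [hspin, interior_inter, interior_closedBall _ one_ne_zero,
      interior_closedBall _ one_ne_zero]
  -- membership criteria
  have hyp : dist b p ^ 2 = (U b)^2 + (V b - s)^2 := by
    rw [hdsq, hUp, hVp]; ring
  have hyq : dist b q ^ 2 = (U b)^2 + (V b + s)^2 := by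
    rw [hdsq, hUq, hVq]; ring
  have habs : -(2*s)*(V b) ≤ 2*s*|V b| := by
    have h' : 0 ≤ 2*s*(|V b| + V b) :=
      mul_nonneg (by positivity) (by linarith [neg_abs_le (V b)])
    linarith [h']
  have habs2 : 2*s*(V b) ≤ 2*s*|V b| := by
    have h' : 0 ≤ 2*s*(|V b| - V b) :=
      mul_nonneg (by positivity) (by linarith [le_abs_self (V b)])
    linarith [h']
  have hmem : b ∈ spindle a c ↔ (U b)^2+(V b)^2+2*s*|V b| ≤ t^2 := by
    rw [hspin]
    simp only [Set.mem_inter_iff, Metric.mem_closedBall]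
    constructor
    · rintro ⟨h1, h2⟩
      have s1 := sq_le_one _ h1 dist_nonneg; rw [hyp] at s1
      have s2 := sq_le_one _ h2 dist_nonneg; rw [hyq] at s2
      rcases abs_cases (V b) with ⟨hv, _⟩ | ⟨hv, _⟩
      · rw [hv]; linarith [s2, hst]
      · rw [hv]; linarith [s1, hst]
    · intro h
      constructor
      · apply le_one_of_sq _ dist_nonneg
        rw [hyp]; linarith [habs, hst, h]
      · apply le_one_of_sq _ dist_nonneg
        rw [hyq]; linarith [habs2, hst, h]
  have hintm : b ∈ interior (spindle a c) ↔ (U b)^2+(V b)^2+2*s*|V b| < t^2 := by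
    rw [hint]
    simp only [Set.mem_inter_iff, Metric.mem_ball]
    constructor
    · rintro ⟨h1, h2⟩
      have s1 := sq_lt_one _ h1 dist_nonneg; rw [hyp] at s1
      have s2 := sq_lt_one _ h2 dist_nonneg; rw [hyq] at s2
      rcases abs_cases (V b) with ⟨hv, _⟩ | ⟨hv, _⟩
      · rw [hv]; linarith [s2, hst]
      · rw [hv]; linarith [s1, hst]
    · intro h
      constructor
      · apply lt_one_of_sq _ dist_nonneg
        rw [hyp]; linarith [habs, hst, h]
      · apply lt_one_of_sq _ dist_nonneg
        rw [hyq]; linarith [habs2, hst, h]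
  -- arc distances
  have hab' : dist a b ^ 2 = (U b + t)^2 + (V b)^2 := by
    rw [hdsq, hUa, hVa]; ring
  have hbc' : dist b c ^ 2 = (U b - t)^2 + (V b)^2 := by
    rw [hdsq, hUc, hVc]; ring
  have hab2 : dist a b = Real.sqrt ((U b + t)^2 + (V b)^2) := by
    rw [← hab', Real.sqrt_sq dist_nonneg]
  have hbc2 : dist b c = Real.sqrt ((U b - t)^2 + (V b)^2) := by
    rw [← hbc', Real.sqrt_sq dist_nonneg]
  have hact : dist a c = 2*t := by rw [htdef]; ring
  obtain ⟨K1, K2⟩ := key2 s t (U b) (V b) hs0 ht0 hst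
    (by rw [← hab']; exact sq_le_four _ hab dist_nonneg)
    (by rw [← hbc']; exact sq_le_four _ hbc dist_nonneg)
  have harc : arcDist a b + arcDist b c
      = 2*(Real.arcsin (Real.sqrt ((U b + t)^2+(V b)^2) / 2)
          + Real.arcsin (Real.sqrt ((U b - t)^2+(V b)^2) / 2)) := by
    rw [arcDist, arcDist, hab2, hbc2]; ring
  have harc2 : arcDist a c = 2*Real.arcsin t := by
    rw [arcDist, hact]
    norm_num
  refine ⟨?_, ?_, ?_⟩
  · constructor
    · intro h hc
      have h2 := K1.mpr (hmem.mp hc)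
      rw [harc, harc2] at h; linarith
    · intro h
      have h2 : ¬ ((U b)^2+(V b)^2+2*s*|V b| ≤ t^2) := fun hc => h (hmem.mpr hc)
      have h3 := not_le.mp (fun hle : arcDist a b + arcDist b c ≤ arcDist a c => by
        rw [harc, harc2] at hle
        exact h2 (K1.mp (by linarith)))
      exact h3
  · have hfr2 : b ∈ frontier (spindle a c) ↔ (U b)^2+(V b)^2+2*s*|V b| = t^2 := by
      rw [hclosed.frontier_eq, Set.mem_diff, hmem, hintm]
      constructor
      · rintro ⟨h1, h2⟩
        exact le_antisymm h1 (not_lt.mp h2)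
      · intro h
        exact ⟨le_of_eq h, not_lt.mpr (ge_of_eq h)⟩
    rw [hfr2, harc, harc2]
    constructor
    · intro h; exact K2.mp (by linarith)
    · intro h; have := K2.mpr h; linarith
  · rw [hintm, harc, harc2]
    constructor
    · intro h
      have hle := K1.mp (by linarith)
      exact lt_of_le_of_ne hle (fun heq => by have := K2.mpr heq; linarith)
    · intro h
      have hle := K1.mpr h.le
      have hne : Real.arcsin (Real.sqrt ((U b + t)^2+(V b)^2) / 2)
          + Real.arcsin (Real.sqrt ((U b - t)^2+(V b)^2) / 2) ≠ Real.arcsin t :=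
        fun heq => absurd (K2.mp heq) (ne_of_lt h)
      have := lt_of_le_of_ne hle hne
      linarith
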